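/- arXiv:2211.04088 — 2 statements merged into one kernel-verified Lean document; each statement's English description precedes it below -/
import Mathlib

section
/- Lemma 3 (spectral bound for the Hessian splitting). Assume the mixing-matrix assumption and that μ_g I ⪯ ∇²_y g_i(x,y) for all i, x, y (μ_g > 0), and let β > 0. Then for all (x,y), with D := D(x,y) and B as in the splitting, the matrix D is positive definite, B is positive semidefinite, and 0 ⪯ D^{-1/2} B D^{-1/2} ⪯ ρ I_{n d2}, where ρ := 2(1−θ)/(2(1−Θ) + β μ_g); moreover D^{-1/2} B D^{-1/2} ≺ I_{n d2} (its spectral norm is strictly less than 1). -/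
open Matrix Kronecker Function

noncomputable section

/-- Euclidean space `ℝ^d`. -/
abbrev Vec (d : ℕ) : Type := EuclideanSpace ℝ (Fin d)

/-- Block-diagonal matrix built from `n` blocks. -/
def blockDiag {n d d' : ℕ} (A : Fin n → Matrix (Fin d) (Fin d') ℝ) :
    Matrix (Fin n × Fin d) (Fin n × Fin d') ℝ :=
  Matrix.of fun p q => if p.1 = q.1 then A p.1 p.2 q.2 else 0

/-- Hessian of `gi` w.r.t. the second (inner) variable: entry `(a,b)` is `∂_{y_a}∂_{y_b} gi(x,y)`. -/
def hessYY {d1 d2 : ℕ} (gi : Vec d1 → Vec d2 → ℝ) (x : Vec d1) (y : Vec d2) :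
    Matrix (Fin d2) (Fin d2) ℝ :=
  Matrix.of fun a b =>
    fderiv ℝ (fun y' => fderiv ℝ (gi x) y' (EuclideanSpace.single b 1)) y
      (EuclideanSpace.single a 1)

/-- Extended mixing matrix `W ⊗ I_d`. -/
def kron1 {n : ℕ} (W : Matrix (Fin n) (Fin n) ℝ) (d : ℕ) :
    Matrix (Fin n × Fin d) (Fin n × Fin d) ℝ :=
  W ⊗ₖ (1 : Matrix (Fin d) (Fin d) ℝ)

/-- `diag(W) ⊗ I_d`. -/
def kronDiag {n : ℕ} (W : Matrix (Fin n) (Fin n) ℝ) (d : ℕ) :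
    Matrix (Fin n × Fin d) (Fin n × Fin d) ℝ :=
  (Matrix.diagonal fun i => W i i) ⊗ₖ (1 : Matrix (Fin d) (Fin d) ℝ)

/-- Assumption 1 of the paper: nonnegative, symmetric, doubly stochastic mixing matrix whose
`1`-eigenspace is the consensus direction, with diagonal entries in `[θ, Θ] ⊆ (0,1)`. -/
structure IsMixingMatrix {n : ℕ} (W : Matrix (Fin n) (Fin n) ℝ) (θ Θ : ℝ) : Prop where
  symm : W.IsSymm
  nonneg : ∀ i j, 0 ≤ W i j
  row_sum : ∀ i, ∑ j, W i j = 1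
  col_sum : ∀ j, ∑ i, W i j = 1
  null_iff : ∀ v : Fin n → ℝ, (1 - W) *ᵥ v = 0 ↔ ∃ c : ℝ, ∀ i, v i = c
  theta_pos : 0 < θ
  theta_le_diag : ∀ i, θ ≤ W i i
  diag_le_Theta : ∀ i, W i i ≤ Θ
  Theta_lt_one : Θ < 1

/-- Block-diagonal inner Hessian `∇²_y 𝐠(x,y)` for block families `x = (xᵢ)`, `y = (yᵢ)`. -/
def bigHessYY' {n d1 d2 : ℕ} (g : Fin n → Vec d1 → Vec d2 → ℝ)
    (x : Fin n → Vec d1) (y : Fin n → Vec d2) :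
    Matrix (Fin n × Fin d2) (Fin n × Fin d2) ℝ :=
  blockDiag fun i => hessYY (g i) (x i) (y i)

/-- `H(x,y) := (I − W⊗I) + β ∇²_y 𝐠(x,y)`. -/
def Hmat' {n d1 d2 : ℕ} (W : Matrix (Fin n) (Fin n) ℝ) (β : ℝ)
    (g : Fin n → Vec d1 → Vec d2 → ℝ) (x : Fin n → Vec d1) (y : Fin n → Vec d2) :
    Matrix (Fin n × Fin d2) (Fin n × Fin d2) ℝ :=
  (1 - kron1 W d2) + β • bigHessYY' g x y

/-- `D(x,y) := β ∇²_y 𝐠(x,y) + 2(I − diag(W⊗I))`. -/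
def Dmat' {n d1 d2 : ℕ} (W : Matrix (Fin n) (Fin n) ℝ) (β : ℝ)
    (g : Fin n → Vec d1 → Vec d2 → ℝ) (x : Fin n → Vec d1) (y : Fin n → Vec d2) :
    Matrix (Fin n × Fin d2) (Fin n × Fin d2) ℝ :=
  β • bigHessYY' g x y + (2 : ℝ) • (1 - kronDiag W d2)

/-- `B := I − 2 diag(W⊗I) + W⊗I`. -/
def Bmat {n : ℕ} (W : Matrix (Fin n) (Fin n) ℝ) (d : ℕ) :
    Matrix (Fin n × Fin d) (Fin n × Fin d) ℝ :=
  (1 : Matrix (Fin n × Fin d) (Fin n × Fin d) ℝ) - (2 : ℝ) • kronDiag W d + kron1 W d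

/-- The positive semidefinite square root of a positive semidefinite matrix
(the definition `Matrix.PosSemidef.sqrt` of the older Mathlib, since removed). -/
def Matrix.PosSemidef.sqrt {m : Type*} [Fintype m] [DecidableEq m] {𝕜 : Type*} [RCLike 𝕜]
    [PartialOrder 𝕜] {A : Matrix m m 𝕜} (hA : A.PosSemidef) : Matrix m m 𝕜 :=
  hA.1.eigenvectorUnitary.1 * diagonal ((↑) ∘ (√·) ∘ hA.1.eigenvalues) *
    (star hA.1.eigenvectorUnitary : Matrix m m 𝕜)

end

/-!
Lemma 3 (spectral bound for the Hessian splitting): under the mixing-matrix assumption and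
`μ_g I ⪯ ∇²_y gᵢ(x,y)` (`μ_g > 0`, `β > 0`), for all `(x,y)` the splitting `H = D − B`
satisfies: `D ≻ 0`, `B ⪰ 0`, `0 ⪯ D^{-1/2} B D^{-1/2} ⪯ ρ I` with
`ρ := 2(1−θ)/(2(1−Θ)+βμ_g)`, and moreover `D^{-1/2} B D^{-1/2} ≺ I` (spectral radius < 1).
Here `D^{-1/2}` is the inverse of the positive-semidefinite square root of `D`.
-/



section
section Scalar
lemma sum_row {n : ℕ} {W : Matrix (Fin n) (Fin n) ℝ} (hrow : ∀ i, ∑ j, W i j = 1)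
    (c : Fin n → ℝ) : ∑ i, ∑ j, W i j * c i = ∑ i, c i :=
  Finset.sum_congr rfl fun i _ => by rw [← Finset.sum_mul, hrow, one_mul]

lemma sum_col {n : ℕ} {W : Matrix (Fin n) (Fin n) ℝ} (hcol : ∀ j, ∑ i, W i j = 1)
    (c : Fin n → ℝ) : ∑ i, ∑ j, W i j * c j = ∑ j, c j := by
  rw [Finset.sum_comm]
  exact Finset.sum_congr rfl fun j _ => by rw [← Finset.sum_mul, hcol, one_mul]

lemma L1 {n : ℕ} {W : Matrix (Fin n) (Fin n) ℝ} (hnn : ∀ i j, 0 ≤ W i j)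
    (hrow : ∀ i, ∑ j, W i j = 1) (hcol : ∀ j, ∑ i, W i j = 1) (u : Fin n → ℝ) :
    ∑ i, ∑ j, W i j * (u i * u j) ≤ ∑ i, u i * u i := by
  have h0 : 0 ≤ ∑ i, ∑ j, W i j * ((u i - u j) * (u i - u j)) :=
    Finset.sum_nonneg fun i _ => Finset.sum_nonneg fun j _ =>
      mul_nonneg (hnn i j) (mul_self_nonneg _)
  have hexp : ∑ i, ∑ j, W i j * ((u i - u j) * (u i - u j))
      = ∑ i, ∑ j, W i j * (u i * u i) + ∑ i, ∑ j, W i j * (u j * u j)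
        - 2 * ∑ i, ∑ j, W i j * (u i * u j) := by
    have h : ∀ i j : Fin n, W i j * ((u i - u j) * (u i - u j))
        = (W i j * (u i * u i) + W i j * (u j * u j)) - 2 * (W i j * (u i * u j)) :=
      fun i j => by ring
    simp only [h, Finset.sum_sub_distrib, Finset.sum_add_distrib, ← Finset.mul_sum]
  rw [hexp, sum_row hrow, sum_col hcol] at h0
  linarith

lemma L2 {n : ℕ} {W : Matrix (Fin n) (Fin n) ℝ} (hnn : ∀ i j, 0 ≤ W i j)
    (hrow : ∀ i, ∑ j, W i j = 1) (hcol : ∀ j, ∑ i, W i j = 1) (u : Fin n → ℝ) :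
    2 * ∑ i, W i i * (u i * u i) - ∑ i, u i * u i ≤ ∑ i, ∑ j, W i j * (u i * u j) := by
  have h0 : ∑ i, W i i * ((u i + u i) * (u i + u i))
      ≤ ∑ i, ∑ j, W i j * ((u i + u j) * (u i + u j)) :=
    Finset.sum_le_sum fun i _ =>
      Finset.single_le_sum (f := fun j => W i j * ((u i + u j) * (u i + u j)))
        (fun j _ => mul_nonneg (hnn i j) (mul_self_nonneg _)) (Finset.mem_univ i)
  have hexp : ∑ i, ∑ j, W i j * ((u i + u j) * (u i + u j))
      = ∑ i, ∑ j, W i j * (u i * u i) + ∑ i, ∑ j, W i j * (u j * u j)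
        + 2 * ∑ i, ∑ j, W i j * (u i * u j) := by
    have h : ∀ i j : Fin n, W i j * ((u i + u j) * (u i + u j))
        = (W i j * (u i * u i) + W i j * (u j * u j)) + 2 * (W i j * (u i * u j)) :=
      fun i j => by ring
    simp only [h, Finset.sum_add_distrib, ← Finset.mul_sum]
  have hdiag : ∑ i, W i i * ((u i + u i) * (u i + u i)) = 4 * ∑ i, W i i * (u i * u i) := by
    rw [Finset.mul_sum]; exact Finset.sum_congr rfl fun i _ => by ring
  rw [hexp, sum_row hrow, sum_col hcol, hdiag] at h0
  linarith
end Scalar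

section QF
variable {n d : ℕ} (W : Matrix (Fin n) (Fin n) ℝ) (v : Fin n × Fin d → ℝ)

lemma sum_prod_swap (f : Fin n × Fin d → ℝ) : ∑ p, f p = ∑ a, ∑ i, f (i, a) := by
  rw [Fintype.sum_prod_type]; exact Finset.sum_comm

lemma qf_one : v ⬝ᵥ (1 : Matrix (Fin n × Fin d) (Fin n × Fin d) ℝ) *ᵥ v = ∑ p, v p * v p := by
  simp [Matrix.one_mulVec, dotProduct]

lemma qf_kron1 : v ⬝ᵥ (kron1 W d) *ᵥ v = ∑ a, ∑ i, ∑ j, W i j * (v (i, a) * v (j, a)) := by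
  have h1 : ∀ p : Fin n × Fin d, ((kron1 W d) *ᵥ v) p = ∑ j, W p.1 j * v (j, p.2) := by
    rintro ⟨i, a⟩
    simp [kron1, Matrix.mulVec, dotProduct, Fintype.sum_prod_type, Matrix.one_apply,
      mul_ite, ite_mul, Finset.mul_sum]
  simp only [dotProduct, h1]
  rw [sum_prod_swap (fun p => v p * ∑ j, W p.1 j * v (j, p.2))]
  refine Finset.sum_congr rfl fun a _ => Finset.sum_congr rfl fun i _ => ?_
  rw [Finset.mul_sum]
  exact Finset.sum_congr rfl fun j _ => by ring

lemma qf_kronDiag : v ⬝ᵥ (kronDiag W d) *ᵥ v = ∑ p, W p.1 p.1 * (v p * v p) := by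
  have h1 : ∀ p : Fin n × Fin d, ((kronDiag W d) *ᵥ v) p = W p.1 p.1 * v p := by
    rintro ⟨i, a⟩
    simp [kronDiag, Matrix.mulVec, dotProduct, Fintype.sum_prod_type, Matrix.one_apply,
      Matrix.diagonal, mul_ite, ite_mul]
  simp only [dotProduct, h1]
  exact Finset.sum_congr rfl fun p _ => by ring

lemma qf_blockDiag (A : Fin n → Matrix (Fin d) (Fin d) ℝ) :
    v ⬝ᵥ (_root_.blockDiag A) *ᵥ v
      = ∑ i, (fun a => v (i, a)) ⬝ᵥ (A i) *ᵥ (fun a => v (i, a)) := by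
  have h1 : ∀ p : Fin n × Fin d, ((_root_.blockDiag A) *ᵥ v) p
      = ∑ b, A p.1 p.2 b * v (p.1, b) := by
    rintro ⟨i, a⟩
    simp [_root_.blockDiag, Matrix.mulVec, dotProduct, Fintype.sum_prod_type,
      Matrix.of_apply, mul_ite, ite_mul, Finset.sum_ite_eq, Finset.sum_ite_eq']
  simp only [dotProduct, h1]
  rw [Fintype.sum_prod_type]
  refine Finset.sum_congr rfl fun i _ => Finset.sum_congr rfl fun a _ => ?_
  simp [Matrix.mulVec, dotProduct]

end QF

section Herm
variable {n d : ℕ} {W : Matrix (Fin n) (Fin n) ℝ}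

lemma isHermitian_kron1 (hs : W.IsSymm) : (kron1 W d).IsHermitian := by
  refine Matrix.IsHermitian.ext fun p q => ?_
  simp [kron1, Matrix.one_apply, hs.apply p.1 q.1, eq_comm]

lemma isHermitian_kronDiag : (kronDiag W d).IsHermitian := by
  refine Matrix.IsHermitian.ext fun p q => ?_
  rcases eq_or_ne p.1 q.1 with h | h
  · simp [kronDiag, Matrix.diagonal, Matrix.one_apply, h, eq_comm]
  · simp [kronDiag, Matrix.diagonal, Matrix.one_apply, h, Ne.symm h]

lemma isHermitian_blockDiag {A : Fin n → Matrix (Fin d) (Fin d) ℝ}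
    (hA : ∀ i, (A i).IsHermitian) : (_root_.blockDiag A).IsHermitian := by
  refine Matrix.IsHermitian.ext fun p q => ?_
  rcases eq_or_ne p.1 q.1 with h | h
  · simp only [_root_.blockDiag, Matrix.of_apply, h, if_pos rfl, star_trivial, eq_comm (a := p.1)]
    simpa using (hA q.1).apply p.2 q.2
  · simp [_root_.blockDiag, h, Ne.symm h]

/-- PSD matrix with unit determinant is positive definite. -/
lemma posDef_of_posSemidef_isUnit_det {m : Type*} [Fintype m] [DecidableEq m]
    {S : Matrix m m ℝ} (hS : S.PosSemidef) (hdet : IsUnit S.det) : S.PosDef := by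
  refine PosDef.of_dotProduct_mulVec_pos hS.1 fun x hx =>
    lt_of_le_of_ne (hS.dotProduct_mulVec_nonneg x) fun h => hx ?_
  have h0 : S *ᵥ x = 0 := (hS.dotProduct_mulVec_zero_iff x).mp h.symm
  have hinj : Function.Injective S.mulVec :=
    Matrix.mulVec_injective_iff_isUnit.mpr ((Matrix.isUnit_iff_isUnit_det S).mpr hdet)
  exact hinj (by simpa using h0)

/-- Conjugation of a positive definite matrix by an invertible Hermitian matrix. -/
lemma posDef_conj {m : Type*} [Fintype m] [DecidableEq m]
    {H R : Matrix m m ℝ} (hH : H.PosDef) (hR : IsUnit R.det) (hRs : R.IsHermitian) :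
    (R * H * R).PosDef := by
  refine PosDef.of_dotProduct_mulVec_pos ?_ fun x hx => ?_
  · have : (R * H * R)ᴴ = Rᴴ * Hᴴ * Rᴴ := by
      rw [Matrix.conjTranspose_mul, Matrix.conjTranspose_mul, Matrix.mul_assoc]
    rw [Matrix.IsHermitian, this, hRs.eq, hH.1.eq]
  · have hinj : Function.Injective R.mulVec :=
      Matrix.mulVec_injective_iff_isUnit.mpr ((Matrix.isUnit_iff_isUnit_det R).mpr hR)
    have hRx : R *ᵥ x ≠ 0 := fun h => hx (hinj (by simpa using h))
    have := hH.dotProduct_mulVec_pos hRx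
    simpa only [star_mulVec, Matrix.dotProduct_mulVec, Matrix.vecMul_vecMul, hRs.eq]
      using this

end Herm

lemma isHermitian_realSmul {m : Type*} [Fintype m] {A : Matrix m m ℝ}
    (h : A.IsHermitian) (r : ℝ) : (r • A).IsHermitian := by
  refine Matrix.IsHermitian.ext fun i j => ?_
  have := h.apply i j
  simp only [star_trivial] at this ⊢
  simp [Matrix.smul_apply, this]

lemma psd_sqrt_mul_self {m : Type*} [Fintype m] [DecidableEq m] {A : Matrix m m ℝ}
    (hA : A.PosSemidef) : hA.sqrt * hA.sqrt = A := by
  have hspec := hA.1.spectral_theorem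
  rw [Unitary.conjStarAlgAut_apply] at hspec
  have hU : (star hA.1.eigenvectorUnitary : Matrix m m ℝ) * hA.1.eigenvectorUnitary.1 = 1 :=
    Unitary.star_mul_self_of_mem hA.1.eigenvectorUnitary.2
  have hd : diagonal ((RCLike.ofReal : ℝ → ℝ) ∘ (√·) ∘ hA.1.eigenvalues)
      * diagonal ((RCLike.ofReal : ℝ → ℝ) ∘ (√·) ∘ hA.1.eigenvalues)
      = diagonal (RCLike.ofReal ∘ hA.1.eigenvalues) := by
    rw [diagonal_mul_diagonal]; congr 1; funext i
    simp [RCLike.ofReal_real_eq_id, Real.mul_self_sqrt (hA.eigenvalues_nonneg i)]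
  calc hA.sqrt * hA.sqrt
      = hA.1.eigenvectorUnitary.1 * (diagonal ((RCLike.ofReal : ℝ → ℝ) ∘ (√·) ∘ hA.1.eigenvalues)
        * ((star hA.1.eigenvectorUnitary : Matrix m m ℝ) * hA.1.eigenvectorUnitary.1)
        * diagonal ((RCLike.ofReal : ℝ → ℝ) ∘ (√·) ∘ hA.1.eigenvalues))
        * (star hA.1.eigenvectorUnitary : Matrix m m ℝ) := by
        simp only [Matrix.PosSemidef.sqrt, Matrix.mul_assoc]
    _ = A := by rw [hU, Matrix.mul_one, hd]; exact hspec.symm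

lemma psd_sqrt_posSemidef {m : Type*} [Fintype m] [DecidableEq m] {A : Matrix m m ℝ}
    (hA : A.PosSemidef) : hA.sqrt.PosSemidef := by
  have h := (PosSemidef.diagonal (d := ((↑) : ℝ → ℝ) ∘ (√·) ∘ hA.1.eigenvalues)
    (fun i => by simp [Real.sqrt_nonneg])).mul_mul_conjTranspose_same
      hA.1.eigenvectorUnitary.1
  rw [← Matrix.star_eq_conjTranspose] at h
  exact h


end

theorem hessian_splitting_spectral_bound {n d1 d2 : ℕ}
    (W : Matrix (Fin n) (Fin n) ℝ) (θ Θ : ℝ)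
    (hW : IsMixingMatrix W θ Θ)
    (g : Fin n → Vec d1 → Vec d2 → ℝ)
    (hg : ∀ i, ContDiff ℝ 2 (Function.uncurry (g i)))
    (μg : ℝ) (hμg : 0 < μg)
    (hlow : ∀ i x y,
      (hessYY (g i) x y - μg • (1 : Matrix (Fin d2) (Fin d2) ℝ)).PosSemidef)
    (β : ℝ) (hβ : 0 < β)
    (ρ : ℝ) (hρ : ρ = 2 * (1 - θ) / (2 * (1 - Θ) + β * μg)) :
    ∀ (x : Fin n → Vec d1) (y : Fin n → Vec d2),
      (Dmat' W β g x y).PosDef ∧ (Bmat W d2).PosSemidef ∧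
      ∀ hD : (Dmat' W β g x y).PosSemidef,
        ((hD.sqrt)⁻¹ * Bmat W d2 * (hD.sqrt)⁻¹).PosSemidef ∧
        (ρ • (1 : Matrix (Fin n × Fin d2) (Fin n × Fin d2) ℝ) -
          (hD.sqrt)⁻¹ * Bmat W d2 * (hD.sqrt)⁻¹).PosSemidef ∧
        ((1 : Matrix (Fin n × Fin d2) (Fin n × Fin d2) ℝ) -
          (hD.sqrt)⁻¹ * Bmat W d2 * (hD.sqrt)⁻¹).PosDef := by
  intro x y
  classical
  rcases Nat.eq_zero_or_pos n with hn | hn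
  · subst hn
    have hsub : ∀ M : Matrix (Fin 0 × Fin d2) (Fin 0 × Fin d2) ℝ, M.PosSemidef := fun M =>
      ⟨Subsingleton.elim _ _, fun z => by rw [Subsingleton.elim z 0]; simp⟩
    have hpd : ∀ M : Matrix (Fin 0 × Fin d2) (Fin 0 × Fin d2) ℝ, M.PosDef := fun M =>
      ⟨Subsingleton.elim _ _, fun z hz => absurd (Subsingleton.elim z 0) hz⟩
    exact ⟨hpd _, hsub _, fun hD => ⟨hsub _, hsub _, hpd _⟩⟩
  -- main case
  have i0 : Fin n := ⟨0, hn⟩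
  have hθΘ : θ ≤ Θ := le_trans (hW.theta_le_diag i0) (hW.diag_le_Theta i0)
  have hΘ1 := hW.Theta_lt_one
  have hβμ : 0 < β * μg := mul_pos hβ hμg
  have hδ : 0 < 2 * (1 - Θ) + β * μg := by nlinarith
  have hρ0 : 0 ≤ ρ := by
    rw [hρ]; apply div_nonneg _ hδ.le; nlinarith
  -- Hermitian facts
  have hHessH : ∀ i, (hessYY (g i) (x i) (y i)).IsHermitian := by
    intro i
    have h1 := (hlow i (x i) (y i)).1
    have h2 : hessYY (g i) (x i) (y i)
        = (hessYY (g i) (x i) (y i) - μg • 1) + μg • 1 := (sub_add_cancel _ _).symm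
    rw [h2]
    exact h1.add (isHermitian_realSmul Matrix.isHermitian_one μg)
  have hGH : (bigHessYY' g x y).IsHermitian := isHermitian_blockDiag hHessH
  have hBH : (Bmat W d2).IsHermitian :=
    (Matrix.isHermitian_one.sub
      (isHermitian_realSmul (isHermitian_kronDiag (W := W) (d := d2)) 2)).add
      (isHermitian_kron1 hW.symm)
  have hDH : (Dmat' W β g x y).IsHermitian :=
    (isHermitian_realSmul hGH β).add
      (isHermitian_realSmul (Matrix.isHermitian_one.sub isHermitian_kronDiag) 2)
  -- quadratic form facts
  have hQG : ∀ v : Fin n × Fin d2 → ℝ,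
      μg * (∑ p, v p * v p) ≤ v ⬝ᵥ (bigHessYY' g x y) *ᵥ v := by
    intro v
    rw [bigHessYY', qf_blockDiag]
    have hper : ∀ i : Fin n, μg * (∑ a, v (i, a) * v (i, a))
        ≤ (fun a => v (i, a)) ⬝ᵥ hessYY (g i) (x i) (y i) *ᵥ (fun a => v (i, a)) := by
      intro i
      have h2 := (hlow i (x i) (y i)).dotProduct_mulVec_nonneg (fun a => v (i, a))
      simp only [Matrix.sub_mulVec, dotProduct_sub, Matrix.smul_mulVec,
        Matrix.one_mulVec, dotProduct_smul, smul_eq_mul, star_trivial] at h2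
      have h3 : (fun a => v (i, a)) ⬝ᵥ (fun a => v (i, a)) = ∑ a, v (i, a) * v (i, a) := rfl
      rw [h3] at h2
      linarith
    calc μg * ∑ p, v p * v p = ∑ i, μg * ∑ a, v (i, a) * v (i, a) := by
          rw [Fintype.sum_prod_type, Finset.mul_sum]
      _ ≤ _ := Finset.sum_le_sum fun i _ => hper i
  have hBq : ∀ v : Fin n × Fin d2 → ℝ,
      v ⬝ᵥ (Bmat W d2) *ᵥ v
        = (∑ p, v p * v p) - 2 * (∑ p, W p.1 p.1 * (v p * v p))
          + ∑ a, ∑ i, ∑ j, W i j * (v (i, a) * v (j, a)) := by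
    intro v
    rw [Bmat]
    simp only [Matrix.add_mulVec, Matrix.sub_mulVec, Matrix.smul_mulVec,
      dotProduct_add, dotProduct_sub, dotProduct_smul, smul_eq_mul]
    rw [qf_one, qf_kronDiag, qf_kron1]
  have hDq : ∀ v : Fin n × Fin d2 → ℝ,
      v ⬝ᵥ (Dmat' W β g x y) *ᵥ v
        = β * (v ⬝ᵥ (bigHessYY' g x y) *ᵥ v)
          + 2 * ((∑ p, v p * v p) - ∑ p, W p.1 p.1 * (v p * v p)) := by
    intro v
    rw [Dmat']
    simp only [Matrix.add_mulVec, Matrix.sub_mulVec, Matrix.smul_mulVec,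
      dotProduct_add, dotProduct_sub, dotProduct_smul, smul_eq_mul]
    rw [qf_one, qf_kronDiag]
  have hKT : ∀ v : Fin n × Fin d2 → ℝ,
      ∑ a, ∑ i, ∑ j, W i j * (v (i, a) * v (j, a)) ≤ ∑ p, v p * v p := by
    intro v
    rw [sum_prod_swap (fun p => v p * v p)]
    exact Finset.sum_le_sum fun a _ =>
      L1 hW.nonneg hW.row_sum hW.col_sum (fun i => v (i, a))
  have hKlow : ∀ v : Fin n × Fin d2 → ℝ,
      2 * (∑ p, W p.1 p.1 * (v p * v p)) - (∑ p, v p * v p)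
        ≤ ∑ a, ∑ i, ∑ j, W i j * (v (i, a) * v (j, a)) := by
    intro v
    rw [sum_prod_swap (fun p => v p * v p),
      sum_prod_swap (fun p => W p.1 p.1 * (v p * v p)), Finset.mul_sum,
      ← Finset.sum_sub_distrib]
    exact Finset.sum_le_sum fun a _ =>
      L2 hW.nonneg hW.row_sum hW.col_sum (fun i => v (i, a))
  have hSWT : ∀ v : Fin n × Fin d2 → ℝ,
      ∑ p, W p.1 p.1 * (v p * v p) ≤ ∑ p, v p * v p :=
    fun v => Finset.sum_le_sum fun p _ => by
      nlinarith [mul_self_nonneg (v p), hW.diag_le_Theta p.1, hW.Theta_lt_one]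
  -- D is positive definite
  have hDpd : (Dmat' W β g x y).PosDef := by
    refine PosDef.of_dotProduct_mulVec_pos hDH fun v hv => ?_
    obtain ⟨p0, hp0⟩ := Function.ne_iff.mp hv
    have hT : 0 < ∑ p, v p * v p :=
      Finset.sum_pos' (fun q _ => mul_self_nonneg _)
        ⟨p0, Finset.mem_univ p0, mul_self_pos.mpr hp0⟩
    rw [star_trivial, hDq v]
    nlinarith [mul_le_mul_of_nonneg_left (hQG v) hβ.le, hSWT v,
      mul_pos (mul_pos hβ hμg) hT]
  -- B is positive semidefinite
  have hBpsd : (Bmat W d2).PosSemidef := by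
    refine PosSemidef.of_dotProduct_mulVec_nonneg hBH fun v => ?_
    rw [star_trivial, hBq v]
    linarith [hKlow v]
  -- H = D - B is positive definite
  have hHpd : (Dmat' W β g x y - Bmat W d2).PosDef := by
    refine PosDef.of_dotProduct_mulVec_pos (hDH.sub hBH) fun v hv => ?_
    obtain ⟨p0, hp0⟩ := Function.ne_iff.mp hv
    have hT : 0 < ∑ p, v p * v p :=
      Finset.sum_pos' (fun q _ => mul_self_nonneg _)
        ⟨p0, Finset.mem_univ p0, mul_self_pos.mpr hp0⟩
    rw [star_trivial, Matrix.sub_mulVec, dotProduct_sub, hDq v, hBq v]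
    nlinarith [hKT v, mul_le_mul_of_nonneg_left (hQG v) hβ.le,
      mul_pos (mul_pos hβ hμg) hT]
  -- ρ • D - B is positive semidefinite
  have hkey : ∀ i : Fin n, 2 * (1 - W i i) ≤ ρ * (β * μg + 2 * (1 - W i i)) := by
    intro i
    rw [hρ, div_mul_eq_mul_div, le_div_iff₀ hδ]
    have h1 := hW.theta_le_diag i
    have h2 := hW.diag_le_Theta i
    nlinarith [mul_nonneg (sub_nonneg.mpr h1) hβμ.le,
      mul_nonneg (sub_nonneg.mpr hθΘ) (by nlinarith : (0:ℝ) ≤ 1 - W i i)]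
  have hρDB : (ρ • Dmat' W β g x y - Bmat W d2).PosSemidef := by
    refine PosSemidef.of_dotProduct_mulVec_nonneg ((isHermitian_realSmul hDH ρ).sub hBH) fun v => ?_
    rw [star_trivial, Matrix.sub_mulVec, dotProduct_sub,
      Matrix.smul_mulVec, dotProduct_smul, smul_eq_mul, hDq v, hBq v]
    have f3 : ∑ p, (2 * (1 - W p.1 p.1)) * (v p * v p)
        ≤ ∑ p, (ρ * (β * μg + 2 * (1 - W p.1 p.1))) * (v p * v p) :=
      Finset.sum_le_sum fun p _ =>
        mul_le_mul_of_nonneg_right (hkey p.1) (mul_self_nonneg _)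
    have e3l : ∑ p : Fin n × Fin d2, (2 * (1 - W p.1 p.1)) * (v p * v p)
        = 2 * (∑ p, v p * v p) - 2 * (∑ p, W p.1 p.1 * (v p * v p)) := by
      have h : ∀ p : Fin n × Fin d2, (2 * (1 - W p.1 p.1)) * (v p * v p)
          = 2 * (v p * v p) - 2 * (W p.1 p.1 * (v p * v p)) := fun p => by ring
      simp only [h, Finset.sum_sub_distrib, ← Finset.mul_sum]
    have e3r : ∑ p : Fin n × Fin d2, (ρ * (β * μg + 2 * (1 - W p.1 p.1))) * (v p * v p)
        = ρ * β * μg * (∑ p, v p * v p) + 2 * ρ * (∑ p, v p * v p)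
          - 2 * ρ * (∑ p, W p.1 p.1 * (v p * v p)) := by
      have h : ∀ p : Fin n × Fin d2, (ρ * (β * μg + 2 * (1 - W p.1 p.1))) * (v p * v p)
          = ρ * β * μg * (v p * v p) + 2 * ρ * (v p * v p)
            - 2 * ρ * (W p.1 p.1 * (v p * v p)) := fun p => by ring
      simp only [h, Finset.sum_sub_distrib, Finset.sum_add_distrib, ← Finset.mul_sum]
    rw [e3l, e3r] at f3
    nlinarith [hKT v, mul_le_mul_of_nonneg_left (hQG v) (mul_nonneg hρ0 hβ.le)]
  refine ⟨hDpd, hBpsd, fun hD => ?_⟩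
  -- square root facts
  set S := hD.sqrt with hS
  have hSpsd : S.PosSemidef := psd_sqrt_posSemidef hD
  have hSS : S * S = Dmat' W β g x y := psd_sqrt_mul_self hD
  have hdetD : (Dmat' W β g x y).det ≠ 0 := hDpd.det_pos.ne'
  have hSdet : IsUnit S.det := by
    rw [isUnit_iff_ne_zero]
    intro h
    apply hdetD
    rw [← hSS, Matrix.det_mul, h, mul_zero]
  have hRH : (S⁻¹).IsHermitian := hSpsd.1.inv
  have hRdet : IsUnit (S⁻¹).det := by
    rw [Matrix.det_nonsing_inv, isUnit_iff_ne_zero, Ring.inverse_eq_inv]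
    exact inv_ne_zero (isUnit_iff_ne_zero.mp hSdet)
  have hRS : S⁻¹ * S = 1 := Matrix.nonsing_inv_mul S hSdet
  have hSR : S * S⁻¹ = 1 := Matrix.mul_nonsing_inv S hSdet
  have hRDR : S⁻¹ * Dmat' W β g x y * S⁻¹ = 1 := by
    rw [← hSS, ← Matrix.mul_assoc, hRS, Matrix.one_mul, hSR]
  refine ⟨?_, ?_, ?_⟩
  · have := hBpsd.mul_mul_conjTranspose_same S⁻¹
    rwa [show (S⁻¹)ᴴ = S⁻¹ from hRH] at this
  · have hid : ρ • (1 : Matrix (Fin n × Fin d2) (Fin n × Fin d2) ℝ)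
        - S⁻¹ * Bmat W d2 * S⁻¹
        = S⁻¹ * (ρ • Dmat' W β g x y - Bmat W d2) * S⁻¹ := by
      rw [Matrix.mul_sub, Matrix.sub_mul, Matrix.mul_smul, Matrix.smul_mul, hRDR]
    rw [hid]
    have := hρDB.mul_mul_conjTranspose_same S⁻¹
    rwa [show (S⁻¹)ᴴ = S⁻¹ from hRH] at this
  · have hid : (1 : Matrix (Fin n × Fin d2) (Fin n × Fin d2) ℝ)
        - S⁻¹ * Bmat W d2 * S⁻¹
        = S⁻¹ * (Dmat' W β g x y - Bmat W d2) * S⁻¹ := by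
      rw [Matrix.mul_sub, Matrix.sub_mul, hRDR]
    rw [hid]
    exact posDef_conj hHpd hRdet hRH
end

section
/- Inexact-gradient descent bound (appendix Lemma). Let Φ : ℝ^N → ℝ be differentiable with L-Lipschitz gradient (L > 0), and suppose Φ(x) ≥ Φ* for all x ∈ ℝ^N. Let 0 < α ≤ 1/L, let g_0, g_1, … ∈ ℝ^N be arbitrary, and define x_{r+1} := x_r − α g_r and Δ_r := g_r − ∇Φ(x_r). Then for every k ≥ 0: √(Φ(x_{k+1}) − Φ*) ≤ √(Φ(x_0) − Φ*) + (1/√(2L)) Σ_{r=0}^{k} ‖Δ_r‖. (In the paper Φ = F(·, y̌*(·)) with L = L_F, g_r = ∇̂F(x_r, y_r^M), Φ* = F(x̌*, y̌*(x̌*)).) -/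
/-!
Inexact-gradient descent bound: if `Φ : ℝ^N → ℝ` is differentiable with `L`-Lipschitz
gradient, bounded below by `Φ*`, `0 < α ≤ 1/L`, and `x_{r+1} = x_r − α g_r` with
gradient errors `Δ_r = g_r − ∇Φ(x_r)`, then for every `k`,
`√(Φ(x_{k+1}) − Φ*) ≤ √(Φ(x₀) − Φ*) + (1/√(2L)) Σ_{r=0}^{k} ‖Δ_r‖`.
-/

local notation "⟪" x ", " y "⟫" => @inner ℝ _ _ x y

private lemma descent_lemma {N : ℕ} (Φ : EuclideanSpace ℝ (Fin N) → ℝ) (L : ℝ)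
    (hdiff : Differentiable ℝ Φ)
    (hlip : ∀ u v, ‖gradient Φ u - gradient Φ v‖ ≤ L * ‖u - v‖)
    (x v : EuclideanSpace ℝ (Fin N)) :
    Φ (x + v) ≤ Φ x + ⟪gradient Φ x, v⟫ + L / 2 * ‖v‖ ^ 2 := by
  set f : ℝ → ℝ := fun t => Φ (x + t • v) - t * ⟪gradient Φ x, v⟫ - L / 2 * t ^ 2 * ‖v‖ ^ 2
    with hf
  have hderiv : ∀ t : ℝ, HasDerivAt f
      (⟪gradient Φ (x + t • v), v⟫ - ⟪gradient Φ x, v⟫ - L * t * ‖v‖ ^ 2) t := by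
    intro t
    have h1 : HasDerivAt (fun t : ℝ => x + t • v) v t := by
      simpa using ((hasDerivAt_id t).smul_const v).const_add x
    have h2 : HasDerivAt (fun t : ℝ => Φ (x + t • v)) ⟪gradient Φ (x + t • v), v⟫ t := by
      have := ((hdiff (x + t • v)).hasGradientAt.hasFDerivAt).comp_hasDerivAt t h1
      exact this.congr_deriv (by simp [InnerProductSpace.toDual_apply_apply])
    have h3 : HasDerivAt (fun t : ℝ => t * ⟪gradient Φ x, v⟫) ⟪gradient Φ x, v⟫ t := by
      simpa using (hasDerivAt_id t).mul_const (⟪gradient Φ x, v⟫ : ℝ)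
    have h4 : HasDerivAt (fun t : ℝ => L / 2 * t ^ 2 * ‖v‖ ^ 2) (L * t * ‖v‖ ^ 2) t := by
      have : HasDerivAt (fun t : ℝ => t ^ 2) (2 * t) t := by
        simpa using hasDerivAt_pow 2 t
      have := (this.const_mul (L / 2)).mul_const (‖v‖ ^ 2)
      exact this.congr_deriv (by ring)
    exact (h2.sub h3).sub h4
  have hanti : AntitoneOn f (Set.Icc 0 1) := by
    apply antitoneOn_of_deriv_nonpos (convex_Icc 0 1)
    · exact (Differentiable.continuous fun t => (hderiv t).differentiableAt).continuousOn
    · intro t ht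
      exact (hderiv t).differentiableAt.differentiableWithinAt
    · intro t ht
      rw [(hderiv t).deriv]
      simp only [interior_Icc, Set.mem_Ioo] at ht
      have key : ⟪gradient Φ (x + t • v) - gradient Φ x, v⟫ ≤ L * t * ‖v‖ ^ 2 := by
        calc ⟪gradient Φ (x + t • v) - gradient Φ x, v⟫
            ≤ ‖gradient Φ (x + t • v) - gradient Φ x‖ * ‖v‖ := real_inner_le_norm _ _
          _ ≤ (L * ‖(x + t • v) - x‖) * ‖v‖ := by
              gcongr; exact hlip _ _
          _ = L * t * ‖v‖ ^ 2 := by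
              simp [norm_smul, abs_of_pos ht.1]; ring
      have := inner_sub_left (𝕜 := ℝ) (gradient Φ (x + t • v)) (gradient Φ x) v
      linarith [key, this.symm.le, this.le]
  have h01 := hanti (Set.left_mem_Icc.2 zero_le_one) (Set.right_mem_Icc.2 zero_le_one)
    zero_le_one
  simp only [hf] at h01
  simp only [zero_smul, add_zero, one_smul, zero_mul, sub_zero, one_pow, mul_one,
    ne_eq, OfNat.ofNat_ne_zero, not_false_eq_true, zero_pow, mul_zero] at h01
  linarith

private lemma sqrt_add_le' {x y : ℝ} (hx : 0 ≤ x) (hy : 0 ≤ y) :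
    Real.sqrt (x + y) ≤ Real.sqrt x + Real.sqrt y := by
  have h : x + y ≤ (Real.sqrt x + Real.sqrt y) ^ 2 := by
    nlinarith [Real.sq_sqrt hx, Real.sq_sqrt hy, Real.sqrt_nonneg x, Real.sqrt_nonneg y]
  calc Real.sqrt (x + y) ≤ Real.sqrt ((Real.sqrt x + Real.sqrt y) ^ 2) := Real.sqrt_le_sqrt h
    _ = Real.sqrt x + Real.sqrt y := Real.sqrt_sq (by positivity)

theorem inexact_gradient_descent_sqrt_bound {N : ℕ}
    (Φ : EuclideanSpace ℝ (Fin N) → ℝ) (L : ℝ) (hL : 0 < L)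
    (hdiff : Differentiable ℝ Φ)
    (hlip : ∀ u v, ‖gradient Φ u - gradient Φ v‖ ≤ L * ‖u - v‖)
    (Φstar : ℝ) (hlb : ∀ x, Φstar ≤ Φ x)
    (α : ℝ) (hα0 : 0 < α) (hα : α ≤ 1 / L)
    (g x : ℕ → EuclideanSpace ℝ (Fin N))
    (hx : ∀ r, x (r + 1) = x r - α • g r) :
    ∀ k : ℕ,
      Real.sqrt (Φ (x (k + 1)) - Φstar) ≤
        Real.sqrt (Φ (x 0) - Φstar) +
          (1 / Real.sqrt (2 * L)) *
            ∑ r ∈ Finset.range (k + 1), ‖g r - gradient Φ (x r)‖ := by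
  have hαL : α * L ≤ 1 := by
    rw [div_eq_inv_mul, mul_one] at hα
    calc α * L ≤ L⁻¹ * L := by gcongr
      _ = 1 := inv_mul_cancel₀ hL.ne'
  -- per-step function value bound
  have step : ∀ r, Φ (x (r + 1)) - Φstar ≤
      (Φ (x r) - Φstar) + ‖g r - gradient Φ (x r)‖ ^ 2 / (2 * L) := by
    intro r
    have hd := descent_lemma Φ L hdiff hlip (x r) (-(α • g r))
    rw [← sub_eq_add_neg, ← hx r] at hd
    set G := gradient Φ (x r) with hG
    set Δ := g r - G with hΔ
    have hgr : g r = G + Δ := by rw [hΔ]; abel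
    have hinner : ⟪G, -(α • g r)⟫ = -(α * (⟪G, G⟫ + ⟪G, Δ⟫)) := by
      rw [hgr, inner_neg_right, inner_smul_right, inner_add_right]
    have hnorm : ‖-(α • g r)‖ ^ 2 = α ^ 2 * (‖G‖ ^ 2 + 2 * ⟪G, Δ⟫ + ‖Δ‖ ^ 2) := by
      rw [hgr, norm_neg, norm_smul]
      rw [mul_pow, Real.norm_eq_abs, sq_abs, @norm_add_sq_real]
    have hGG : ⟪G, G⟫ = ‖G‖ ^ 2 := real_inner_self_eq_norm_sq G
    have hP1 : ⟪G, Δ⟫ ≤ ‖G‖ * ‖Δ‖ := real_inner_le_norm G Δ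
    have hP2 : -(‖G‖ * ‖Δ‖) ≤ ⟪G, Δ⟫ := by
      have := real_inner_le_norm G (-Δ)
      rw [inner_neg_right, norm_neg] at this
      linarith
    rw [hinner, hnorm, hGG] at hd
    have ha : (0:ℝ) ≤ ‖G‖ := norm_nonneg _
    have hb : (0:ℝ) ≤ ‖Δ‖ := norm_nonneg _
    have hkey : -(α * (‖G‖ ^ 2 + ⟪G, Δ⟫)) + L / 2 * (α ^ 2 * (‖G‖ ^ 2 + 2 * ⟪G, Δ⟫ + ‖Δ‖ ^ 2))
        ≤ ‖Δ‖ ^ 2 / (2 * L) := by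
      rw [le_div_iff₀ (by positivity)]
      have hs : (0:ℝ) < α * L := mul_pos hα0 hL
      have hs1 : (0:ℝ) ≤ 1 - α * L := by linarith
      nlinarith [mul_nonneg hs.le (sq_nonneg (‖G‖ - (1 - α * L) * ‖Δ‖)),
        mul_nonneg (mul_nonneg hs.le hs1) (sq_nonneg ‖G‖),
        mul_nonneg (mul_nonneg hs.le hs1) (by linarith : (0:ℝ) ≤ inner ℝ G Δ + ‖G‖ * ‖Δ‖),
        mul_nonneg (mul_nonneg hs1 (by positivity : (0:ℝ) ≤ 1 + (α * L) ^ 2)) (sq_nonneg ‖Δ‖)]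
    linarith
  -- per-step sqrt bound
  have sstep : ∀ r, Real.sqrt (Φ (x (r + 1)) - Φstar) ≤
      Real.sqrt (Φ (x r) - Φstar) + (1 / Real.sqrt (2 * L)) * ‖g r - gradient Φ (x r)‖ := by
    intro r
    have h0 : (0:ℝ) ≤ Φ (x r) - Φstar := sub_nonneg.2 (hlb _)
    have h1 : Real.sqrt (Φ (x (r + 1)) - Φstar) ≤
        Real.sqrt ((Φ (x r) - Φstar) + ‖g r - gradient Φ (x r)‖ ^ 2 / (2 * L)) :=
      Real.sqrt_le_sqrt (step r)
    have h2 : Real.sqrt (‖g r - gradient Φ (x r)‖ ^ 2 / (2 * L)) =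
        (1 / Real.sqrt (2 * L)) * ‖g r - gradient Φ (x r)‖ := by
      rw [Real.sqrt_div (sq_nonneg _), Real.sqrt_sq (norm_nonneg _)]
      ring
    calc Real.sqrt (Φ (x (r + 1)) - Φstar)
        ≤ Real.sqrt ((Φ (x r) - Φstar) + ‖g r - gradient Φ (x r)‖ ^ 2 / (2 * L)) := h1
      _ ≤ Real.sqrt (Φ (x r) - Φstar) + Real.sqrt (‖g r - gradient Φ (x r)‖ ^ 2 / (2 * L)) :=
          sqrt_add_le' h0 (by positivity)
      _ = _ := by rw [h2]
  intro k
  induction k with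
  | zero => simpa using sstep 0
  | succ k ih =>
    calc Real.sqrt (Φ (x (k + 1 + 1)) - Φstar)
        ≤ Real.sqrt (Φ (x (k + 1)) - Φstar)
            + (1 / Real.sqrt (2 * L)) * ‖g (k + 1) - gradient Φ (x (k + 1))‖ := sstep (k + 1)
      _ ≤ Real.sqrt (Φ (x 0) - Φstar) +
            (1 / Real.sqrt (2 * L)) * ∑ r ∈ Finset.range (k + 1), ‖g r - gradient Φ (x r)‖
            + (1 / Real.sqrt (2 * L)) * ‖g (k + 1) - gradient Φ (x (k + 1))‖ := by linarith
      _ = _ := by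
          rw [show (∑ r ∈ Finset.range (k + 1 + 1), ‖g r - gradient Φ (x r)‖) =
            (∑ r ∈ Finset.range (k + 1), ‖g r - gradient Φ (x r)‖) +
              ‖g (k + 1) - gradient Φ (x (k + 1))‖ from Finset.sum_range_succ _ _]
          ring
end
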